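/- Let ρ and σ be positive semi-definite operators with spectral decompositions ρ = Σ_k q_k |φ_k⟩⟨φ_k| and σ = Σ_j p_j |ψ_j⟩⟨ψ_j|. For every t ∈ (0,1], Σ_{j,k} q_k²/(q_k + p_j·t) · |⟨ψ_j|φ_k⟩|² = Tr[ρ] − inf_Z ( Tr[ρ Z†Z] + t·Tr[σ (𝟙+Z)(𝟙+Z†)] ). -/

import Mathlib

open Matrix

private lemma pw_lower (a b : ℝ) (ha : 0 ≤ a) (hb : 0 ≤ b) (u z : ℂ) :
    a * b / (a + b) * Complex.normSq u ≤ a * Complex.normSq z + b * Complex.normSq (u + z) := by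
  rcases (add_nonneg ha hb).eq_or_lt with h | h
  · have ha0 : a = 0 := by linarith
    have hb0 : b = 0 := by linarith
    simp [ha0, hb0]
  · rw [div_mul_eq_mul_div, div_le_iff₀ h]
    simp only [Complex.normSq_apply, Complex.add_re, Complex.add_im]
    nlinarith [sq_nonneg (a * z.re + b * (u.re + z.re)), sq_nonneg (a * z.im + b * (u.im + z.im))]

private lemma pw_eq (a b : ℝ) (ha : 0 ≤ a) (hb : 0 ≤ b) (u : ℂ) :
    a * Complex.normSq (((-(b / (a + b)) : ℝ) : ℂ) * u)
      + b * Complex.normSq (u + ((-(b / (a + b)) : ℝ) : ℂ) * u)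
      = a * b / (a + b) * Complex.normSq u := by
  rcases (add_nonneg ha hb).eq_or_lt with h | h
  · have ha0 : a = 0 := by linarith
    have hb0 : b = 0 := by linarith
    simp [ha0, hb0]
  · have hne : a + b ≠ 0 := ne_of_gt h
    have h2 : u + ((-(b / (a + b)) : ℝ) : ℂ) * u = ((a / (a + b) : ℝ) : ℂ) * u := by
      push_cast
      have hne' : ((a : ℂ) + b) ≠ 0 := by exact_mod_cast
        (by push_cast; exact_mod_cast hne : ((a + b : ℝ) : ℂ) ≠ 0)
      field_simp
      ring
    rw [h2, Complex.normSq_mul, Complex.normSq_mul, Complex.normSq_ofReal,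
      Complex.normSq_ofReal]
    field_simp
    ring

private lemma trace_cycle_aux {n : ℕ} (A B U : Matrix (Fin n) (Fin n) ℂ) :
    trace (U * A * Uᴴ * B) = trace (A * (Uᴴ * B * U)) := by
  calc trace (U * A * Uᴴ * B) = trace ((U * A) * (Uᴴ * B)) := by rw [Matrix.mul_assoc]
    _ = trace ((Uᴴ * B) * (U * A)) := trace_mul_comm _ _
    _ = trace ((Uᴴ * B * U) * A) := by simp only [Matrix.mul_assoc]
    _ = trace (A * (Uᴴ * B * U)) := trace_mul_comm _ _

private lemma trace_diag_left {n : ℕ} (q : Fin n → ℝ) (W : Matrix (Fin n) (Fin n) ℂ) :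
    (trace (diagonal (fun k => (q k : ℂ)) * (Wᴴ * W))).re
      = ∑ k, q k * ∑ j, Complex.normSq (W j k) := by
  have h1 : trace (diagonal (fun k => (q k : ℂ)) * (Wᴴ * W))
      = ∑ k, (q k : ℂ) * ∑ j, ((Complex.normSq (W j k) : ℝ) : ℂ) := by
    simp only [Matrix.trace, Matrix.diag, Matrix.diagonal_mul]
    simp only [Matrix.mul_apply, Matrix.conjTranspose_apply, Complex.star_def,
      Complex.normSq_eq_conj_mul_self]
  rw [h1, Complex.re_sum]
  refine Finset.sum_congr rfl fun k _ => ?_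
  rw [← Complex.ofReal_sum, ← Complex.ofReal_mul, Complex.ofReal_re]

private lemma trace_diag_right {n : ℕ} (p : Fin n → ℝ) (A : Matrix (Fin n) (Fin n) ℂ) :
    (trace (diagonal (fun j => (p j : ℂ)) * (A * Aᴴ))).re
      = ∑ j, p j * ∑ k, Complex.normSq (A j k) := by
  have h1 : trace (diagonal (fun j => (p j : ℂ)) * (A * Aᴴ))
      = ∑ j, (p j : ℂ) * ∑ k, ((Complex.normSq (A j k) : ℝ) : ℂ) := by
    simp only [Matrix.trace, Matrix.diag, Matrix.diagonal_mul]
    simp only [Matrix.mul_apply, Matrix.conjTranspose_apply, Complex.star_def,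
      Complex.mul_conj]
  rw [h1, Complex.re_sum]
  refine Finset.sum_congr rfl fun k _ => ?_
  rw [← Complex.ofReal_sum, ← Complex.ofReal_mul, Complex.ofReal_re]

/-- Let `ρ = Σ_k q_k |φ_k⟩⟨φ_k|` and `σ = Σ_j p_j |ψ_j⟩⟨ψ_j|` be positive semi-definite
operators given via spectral decompositions.  For every `t ∈ (0,1]`,
`Σ_{j,k} q_k²/(q_k + p_j t) |⟨ψ_j|φ_k⟩|²
  = Tr[ρ] − inf_Z ( Tr[ρ Z†Z] + t·Tr[σ (𝟙+Z)(𝟙+Z†)] )`. -/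
theorem stmt4 {n : ℕ} (q p : Fin n → ℝ) (hq : ∀ k, 0 ≤ q k) (hp : ∀ j, 0 ≤ p j)
    (φ ψ : Fin n → (Fin n → ℂ))
    (hφ : ∀ k l, star (φ k) ⬝ᵥ φ l = if k = l then 1 else 0)
    (hψ : ∀ k l, star (ψ k) ⬝ᵥ ψ l = if k = l then 1 else 0)
    (ρ σ : Matrix (Fin n) (Fin n) ℂ)
    (hρ : ρ = ∑ k, (q k : ℂ) • vecMulVec (φ k) (star (φ k)))
    (hσ : σ = ∑ j, (p j : ℂ) • vecMulVec (ψ j) (star (ψ j)))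
    (t : ℝ) (ht : t ∈ Set.Ioc (0 : ℝ) 1) :
    ∑ j, ∑ k, q k ^ 2 / (q k + p j * t) * ‖star (ψ j) ⬝ᵥ φ k‖ ^ 2 =
      (trace ρ).re - ⨅ Z : Matrix (Fin n) (Fin n) ℂ,
        ((trace (ρ * (Zᴴ * Z))).re +
          t * (trace (σ * ((1 + Z) * (1 + Zᴴ)))).re) := by
  obtain ⟨ht0, ht1⟩ := ht
  set U : Matrix (Fin n) (Fin n) ℂ := Matrix.of (fun i k => φ k i) with hUdef
  set V : Matrix (Fin n) (Fin n) ℂ := Matrix.of (fun i j => ψ j i) with hVdef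
  have hUU : Uᴴ * U = 1 := by
    ext k l
    simpa [hUdef, Matrix.mul_apply, Matrix.conjTranspose_apply, dotProduct,
      Matrix.one_apply] using hφ k l
  have hVV : Vᴴ * V = 1 := by
    ext k l
    simpa [hVdef, Matrix.mul_apply, Matrix.conjTranspose_apply, dotProduct,
      Matrix.one_apply] using hψ k l
  have hUU' : U * Uᴴ = 1 := mul_eq_one_comm.mp hUU
  have hVV' : V * Vᴴ = 1 := mul_eq_one_comm.mp hVV
  have hρ' : ρ = U * diagonal (fun k => (q k : ℂ)) * Uᴴ := by
    rw [hρ]; ext i j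
    simp only [Matrix.sum_apply, Matrix.smul_apply, vecMulVec_apply, Pi.star_apply,
      Matrix.mul_apply, Matrix.conjTranspose_apply, diagonal_apply, hUdef, Matrix.of_apply,
      Finset.sum_mul, smul_eq_mul]
    rw [Finset.sum_comm]
    refine Finset.sum_congr rfl fun k _ => ?_
    simp [Finset.mul_sum, Finset.sum_ite_eq, RCLike.star_def]
    ring
  have hσ' : σ = V * diagonal (fun j => (p j : ℂ)) * Vᴴ := by
    rw [hσ]; ext i j
    simp only [Matrix.sum_apply, Matrix.smul_apply, vecMulVec_apply, Pi.star_apply,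
      Matrix.mul_apply, Matrix.conjTranspose_apply, diagonal_apply, hVdef, Matrix.of_apply,
      Finset.sum_mul, smul_eq_mul]
    rw [Finset.sum_comm]
    refine Finset.sum_congr rfl fun k _ => ?_
    simp [Finset.mul_sum, Finset.sum_ite_eq, RCLike.star_def]
    ring
  set C : Matrix (Fin n) (Fin n) ℂ := Vᴴ * U with hCdef
  have hCee : ∀ j k, C j k = star (ψ j) ⬝ᵥ φ k := by
    intro j k
    simp [hCdef, Matrix.mul_apply, Matrix.conjTranspose_apply, dotProduct, hUdef, hVdef]
  have hCC : Cᴴ * C = 1 := by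
    rw [hCdef, conjTranspose_mul, conjTranspose_conjTranspose, Matrix.mul_assoc,
      ← Matrix.mul_assoc V, hVV', Matrix.one_mul, hUU]
  -- the pointwise minima
  set m : Fin n → Fin n → ℝ :=
    fun j k => q k * (t * p j) / (q k + t * p j) * Complex.normSq (C j k) with hmdef
  set S : ℝ := ∑ j, ∑ k, m j k with hSdef
  -- the objective as a function of W = Vᴴ Z U
  have key : ∀ Z : Matrix (Fin n) (Fin n) ℂ,
      (trace (ρ * (Zᴴ * Z))).re + t * (trace (σ * ((1 + Z) * (1 + Zᴴ)))).re
        = ∑ j, ∑ k, (q k * Complex.normSq ((Vᴴ * Z * U) j k)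
            + t * p j * Complex.normSq (C j k + (Vᴴ * Z * U) j k)) := by
    intro Z
    set W : Matrix (Fin n) (Fin n) ℂ := Vᴴ * Z * U with hWdef
    have hW1 : Uᴴ * (Zᴴ * Z) * U = Wᴴ * W := by
      rw [hWdef]
      simp only [conjTranspose_mul, conjTranspose_conjTranspose, Matrix.mul_assoc]
      rw [← Matrix.mul_assoc V Vᴴ, hVV', Matrix.one_mul]
    have hW2 : Vᴴ * ((1 + Z) * (1 + Zᴴ)) * V = (C + W) * (C + W)ᴴ := by
      have h1 : C + W = Vᴴ * (1 + Z) * U := by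
        rw [hCdef, hWdef, Matrix.mul_add, Matrix.add_mul, Matrix.mul_one]
      rw [h1]
      simp only [conjTranspose_mul, conjTranspose_conjTranspose, conjTranspose_add,
        conjTranspose_one, Matrix.mul_assoc]
      rw [← Matrix.mul_assoc U Uᴴ, hUU', Matrix.one_mul]
    have e1 : (trace (ρ * (Zᴴ * Z))).re = ∑ k, q k * ∑ j, Complex.normSq (W j k) := by
      rw [hρ', trace_cycle_aux, hW1, trace_diag_left]
    have e2 : (trace (σ * ((1 + Z) * (1 + Zᴴ)))).re
        = ∑ j, p j * ∑ k, Complex.normSq (C j k + W j k) := by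
      rw [hσ', trace_cycle_aux, hW2, trace_diag_right]
      simp only [Matrix.add_apply]
    rw [e1, e2]
    have hA : (∑ k, q k * ∑ j, Complex.normSq (W j k))
        = ∑ j, ∑ k, q k * Complex.normSq (W j k) := by
      rw [Finset.sum_comm]
      exact Finset.sum_congr rfl fun k _ => Finset.mul_sum _ _ _
    have hB : t * (∑ j, p j * ∑ k, Complex.normSq (C j k + W j k))
        = ∑ j, ∑ k, t * p j * Complex.normSq (C j k + W j k) := by
      rw [Finset.mul_sum]
      refine Finset.sum_congr rfl fun j _ => ?_
      rw [← mul_assoc]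
      exact Finset.mul_sum _ _ _
    rw [hA, hB, ← Finset.sum_add_distrib]
    exact Finset.sum_congr rfl fun j _ => Finset.sum_add_distrib.symm
  -- lower bound for the objective
  have glower : ∀ W : Matrix (Fin n) (Fin n) ℂ,
      S ≤ ∑ j, ∑ k, (q k * Complex.normSq (W j k)
          + t * p j * Complex.normSq (C j k + W j k)) := by
    intro W
    refine Finset.sum_le_sum fun j _ => Finset.sum_le_sum fun k _ => ?_
    exact pw_lower (q k) (t * p j) (hq k) (mul_nonneg ht0.le (hp j)) (C j k) (W j k)
  -- optimal W
  set Wstar : Matrix (Fin n) (Fin n) ℂ :=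
    Matrix.of (fun j k => ((-(t * p j / (q k + t * p j)) : ℝ) : ℂ) * C j k) with hWstar
  have geq : (∑ j, ∑ k, (q k * Complex.normSq (Wstar j k)
      + t * p j * Complex.normSq (C j k + Wstar j k))) = S := by
    refine Finset.sum_congr rfl fun j _ => Finset.sum_congr rfl fun k _ => ?_
    simp only [hWstar, Matrix.of_apply]
    exact pw_eq (q k) (t * p j) (hq k) (mul_nonneg ht0.le (hp j)) (C j k)
  have hcan : Vᴴ * (V * Wstar * Uᴴ) * U = Wstar := by
    simp only [Matrix.mul_assoc]
    rw [hUU, Matrix.mul_one, ← Matrix.mul_assoc, hVV, Matrix.one_mul]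
  -- the infimum
  have hbdd : BddBelow (Set.range fun Z : Matrix (Fin n) (Fin n) ℂ =>
      (trace (ρ * (Zᴴ * Z))).re + t * (trace (σ * ((1 + Z) * (1 + Zᴴ)))).re) := by
    refine ⟨S, ?_⟩
    rintro x ⟨Z, rfl⟩
    have h2 := glower (Vᴴ * Z * U)
    rw [← key Z] at h2
    exact h2
  have hinf : (⨅ Z : Matrix (Fin n) (Fin n) ℂ,
      ((trace (ρ * (Zᴴ * Z))).re + t * (trace (σ * ((1 + Z) * (1 + Zᴴ)))).re)) = S := by
    refine le_antisymm ?_ ?_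
    · have h1 := ciInf_le hbdd (V * Wstar * Uᴴ)
      beta_reduce at h1
      rw [key (V * Wstar * Uᴴ), hcan, geq] at h1
      exact h1
    · refine le_ciInf fun Z => ?_
      have h2 := glower (Vᴴ * Z * U)
      rw [← key Z] at h2
      exact h2
  -- trace of ρ
  have htr : (trace ρ).re = ∑ k, q k := by
    rw [hρ', Matrix.trace_mul_cycle, hUU, Matrix.one_mul]
    simp [Matrix.trace, Matrix.diag, Matrix.diagonal_apply_eq, Complex.re_sum]
  -- each column of C has unit norm
  have hone : ∀ k, (∑ j, Complex.normSq (C j k)) = 1 := by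
    intro k
    have h1 : (Cᴴ * C) k k = (1 : Matrix (Fin n) (Fin n) ℂ) k k := by rw [hCC]
    have h2 : (Cᴴ * C) k k = ((∑ j, Complex.normSq (C j k) : ℝ) : ℂ) := by
      rw [Matrix.mul_apply]
      push_cast
      refine Finset.sum_congr rfl fun j _ => ?_
      rw [Matrix.conjTranspose_apply, Complex.star_def,
        ← Complex.normSq_eq_conj_mul_self]
    rw [h2, Matrix.one_apply_eq] at h1
    exact_mod_cast h1
  rw [htr, hinf]
  have hsum : (∑ k, q k) = ∑ j, ∑ k, q k * Complex.normSq (C j k) := by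
    rw [Finset.sum_comm]
    refine Finset.sum_congr rfl fun k _ => ?_
    rw [← Finset.mul_sum, hone k, mul_one]
  rw [hsum, hSdef, ← Finset.sum_sub_distrib]
  refine Finset.sum_congr rfl fun j _ => ?_
  rw [← Finset.sum_sub_distrib]
  refine Finset.sum_congr rfl fun k _ => ?_
  rw [Complex.sq_norm, ← hCee j k, hmdef]
  rcases eq_or_ne (q k + p j * t) 0 with h0 | h0
  · have hqk : q k = 0 := by nlinarith [hq k, hp j, ht0.le, mul_nonneg (hp j) ht0.le]
    simp [hqk]
  · have h0' : q k + t * p j ≠ 0 := by rw [mul_comm t (p j)]; exact h0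
    field_simp
    ring
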